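/- arXiv:1606.02525 — 2 statements merged into one kernel-verified Lean document; each statement's English description precedes it below -/
import Mathlib

section
/- Let d, d₁ ≥ 1, let u : ℝ^d → ℝ^{d₁} be twice continuously differentiable, and fix x ∈ ℝ^d, h ∈ ℝ^{d₁}, a vector a ∈ ℝ^d, matrices A ∈ ℝ^{d×d} and c ∈ ℝ^{d₁×d₁}, and an array C = (C_{mlk}) ∈ ℝ^{d₁×d₁×d}. Define Φ(x,h) = ⟨h, u(x)⟩, the enlarged drift q(x,h) = (a, c h) ∈ ℝ^{d+d₁}, and the enlarged diffusion Q(x,h) : ℝ^d → ℝ^{d+d₁} by Q(x,h)w = (A w, C(h,w)), where C(h,w)_m = Σ_{l,k} C_{mlk} h_l w_k. Then ½ Tr(Q(x,h)ᵀ D²Φ(x,h) Q(x,h)) + ⟨q(x,h), ∇Φ(x,h)⟩ = Σ_{l=1}^{d₁} h_l v_l(x), where v_l(x) = ½ Tr(Aᵀ ∇²u_l(x) A) + ⟨a, ∇u_l(x)⟩ + Σ_{m=1}^{d₁} Σ_{j=1}^{d} B^j_{lm} ∂_j u_m(x) + Σ_{m=1}^{d₁} c_{ml} u_m(x), with B^j_{lm}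 := Σ_{k=1}^{d} C_{mlk} A_{jk}, and D²Φ denotes the full Hessian of Φ on ℝ^{d+d₁}. -/
/-- `Φ(x,h) = ⟨h, u(x)⟩` on the enlarged phase space `ℝ^d × ℝ^{d₁}`. -/
noncomputable def enlargedPairing {d d₁ : ℕ} (u : (Fin d → ℝ) → (Fin d₁ → ℝ)) :
    (Fin d → ℝ) × (Fin d₁ → ℝ) → ℝ := fun p => ∑ m, p.2 m * u p.1 m

/-- First derivative of the pairing `Φ` on the enlarged phase space. -/
lemma enlargedPairing_fderiv_apply {d d₁ : ℕ} (u : (Fin d → ℝ) → (Fin d₁ → ℝ))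
    (hu : ContDiff ℝ 2 u)
    (p : (Fin d → ℝ) × (Fin d₁ → ℝ)) (v : Fin d → ℝ) (w : Fin d₁ → ℝ) :
    fderiv ℝ (enlargedPairing u) p (v, w)
      = ∑ m, (w m * u p.1 m + p.2 m * fderiv ℝ (fun y => u y m) p.1 v) := by
  have hU : ∀ m, ContDiff ℝ 2 (fun y => u y m) := fun m => contDiff_pi.mp hu m
  have hD : HasFDerivAt (enlargedPairing u)
      (∑ m, ((p.2 m) • ((fderiv ℝ (fun y => u y m) p.1).comp
          (ContinuousLinearMap.fst ℝ (Fin d → ℝ) (Fin d₁ → ℝ)))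
        + (u p.1 m) • ((ContinuousLinearMap.proj m).comp
          (ContinuousLinearMap.snd ℝ (Fin d → ℝ) (Fin d₁ → ℝ))))) p := by
    refine HasFDerivAt.fun_sum fun m _ => ?_
    have h1 : HasFDerivAt (fun q : (Fin d → ℝ) × (Fin d₁ → ℝ) => q.2 m)
        ((ContinuousLinearMap.proj m).comp
          (ContinuousLinearMap.snd ℝ (Fin d → ℝ) (Fin d₁ → ℝ))) p :=
      ((ContinuousLinearMap.proj m).comp
          (ContinuousLinearMap.snd ℝ (Fin d → ℝ) (Fin d₁ → ℝ))).hasFDerivAt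
    have h2 : HasFDerivAt (fun q : (Fin d → ℝ) × (Fin d₁ → ℝ) => u q.1 m)
        ((fderiv ℝ (fun y => u y m) p.1).comp
          (ContinuousLinearMap.fst ℝ (Fin d → ℝ) (Fin d₁ → ℝ))) p :=
      (((hU m).differentiable (by norm_num)).differentiableAt.hasFDerivAt).comp p
        (hasFDerivAt_fst)
    exact h1.mul h2
  rw [hD.fderiv]
  simp only [ContinuousLinearMap.sum_apply]
  simp
  exact Finset.sum_congr rfl fun m _ => by ring

/-- Second derivative of the pairing `Φ` in a fixed direction `(v, w)`. -/
lemma enlargedPairing_fderiv2_apply {d d₁ : ℕ} (u : (Fin d → ℝ) → (Fin d₁ → ℝ))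
    (hu : ContDiff ℝ 2 u)
    (x : Fin d → ℝ) (h : Fin d₁ → ℝ) (v : Fin d → ℝ) (w : Fin d₁ → ℝ) :
    fderiv ℝ (fun p => fderiv ℝ (enlargedPairing u) p (v, w)) (x, h) (v, w)
      = ∑ m, (2 * (w m * fderiv ℝ (fun y => u y m) x v)
          + h m * fderiv ℝ (fun y => fderiv ℝ (fun y' => u y' m) y v) x v) := by
  have hU : ∀ m, ContDiff ℝ 2 (fun y => u y m) := fun m => contDiff_pi.mp hu m
  have hFv : ∀ m, ContDiff ℝ 1 (fun y => fderiv ℝ (fun y' => u y' m) y v) :=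
    fun m => ((hU m).fderiv_right (by norm_num)).clm_apply contDiff_const
  have hfun : (fun p : (Fin d → ℝ) × (Fin d₁ → ℝ) => fderiv ℝ (enlargedPairing u) p (v, w))
      = fun p => ∑ m, (w m * u p.1 m
          + p.2 m * fderiv ℝ (fun y => u y m) p.1 v) :=
    funext fun p => enlargedPairing_fderiv_apply u hu p v w
  rw [hfun]
  have hD : HasFDerivAt
      (fun p : (Fin d → ℝ) × (Fin d₁ → ℝ) => ∑ m, (w m * u p.1 m
          + p.2 m * fderiv ℝ (fun y => u y m) p.1 v))
      (∑ m, ((w m) • ((fderiv ℝ (fun y => u y m) x).comp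
            (ContinuousLinearMap.fst ℝ (Fin d → ℝ) (Fin d₁ → ℝ)))
        + ((h m) • ((fderiv ℝ (fun y => fderiv ℝ (fun y' => u y' m) y v) x).comp
            (ContinuousLinearMap.fst ℝ (Fin d → ℝ) (Fin d₁ → ℝ)))
          + (fderiv ℝ (fun y => u y m) x v) • ((ContinuousLinearMap.proj m).comp
            (ContinuousLinearMap.snd ℝ (Fin d → ℝ) (Fin d₁ → ℝ)))))) (x, h) := by
    refine HasFDerivAt.fun_sum fun m _ => ?_
    have h2 : HasFDerivAt (fun q : (Fin d → ℝ) × (Fin d₁ → ℝ) => u q.1 m)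
        ((fderiv ℝ (fun y => u y m) x).comp
          (ContinuousLinearMap.fst ℝ (Fin d → ℝ) (Fin d₁ → ℝ))) (x, h) :=
      (((hU m).differentiable (by norm_num)).differentiableAt.hasFDerivAt).comp (x, h)
        hasFDerivAt_fst
    have h1 : HasFDerivAt (fun q : (Fin d → ℝ) × (Fin d₁ → ℝ) => q.2 m)
        ((ContinuousLinearMap.proj m).comp
          (ContinuousLinearMap.snd ℝ (Fin d → ℝ) (Fin d₁ → ℝ))) (x, h) :=
      ((ContinuousLinearMap.proj m).comp
          (ContinuousLinearMap.snd ℝ (Fin d → ℝ) (Fin d₁ → ℝ))).hasFDerivAt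
    have h3 : HasFDerivAt
        (fun q : (Fin d → ℝ) × (Fin d₁ → ℝ) => fderiv ℝ (fun y' => u y' m) q.1 v)
        ((fderiv ℝ (fun y => fderiv ℝ (fun y' => u y' m) y v) x).comp
          (ContinuousLinearMap.fst ℝ (Fin d → ℝ) (Fin d₁ → ℝ))) (x, h) :=
      (((hFv m).differentiable one_ne_zero).differentiableAt.hasFDerivAt).comp (x, h)
        hasFDerivAt_fst
    exact (h2.const_mul (w m)).add (h1.mul h3)
  rw [hD.fderiv]
  simp only [ContinuousLinearMap.sum_apply]
  simp
  exact Finset.sum_congr rfl fun m _ => by ring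

/-- A continuous linear functional on `ℝ^d` expanded over the standard basis. -/
lemma clm_eq_sum_single {d : ℕ} (L : (Fin d → ℝ) →L[ℝ] ℝ) (v : Fin d → ℝ) :
    L v = ∑ j, v j * L (Pi.single j 1) := by
  conv_lhs => rw [show v = ∑ j, v j • (Pi.single j 1 : Fin d → ℝ) by
    simp only [← Pi.single_smul, smul_eq_mul, mul_one, Finset.univ_sum_single]]
  rw [map_sum]
  simp [smul_eq_mul]

/-- Exchanging the outermost and innermost sums in a quadruple sum. -/
lemma sum4_swap {α β γ δ : Type*} [Fintype α] [Fintype β] [Fintype γ] [Fintype δ]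
    (F : α → β → γ → δ → ℝ) :
    ∑ k : α, ∑ m : β, ∑ j : γ, ∑ l : δ, F k m j l
      = ∑ l : δ, ∑ m : β, ∑ j : γ, ∑ k : α, F k m j l :=
  calc ∑ k : α, ∑ m : β, ∑ j : γ, ∑ l : δ, F k m j l
      = ∑ k, ∑ m, ∑ l, ∑ j, F k m j l :=
        Finset.sum_congr rfl fun _ _ => Finset.sum_congr rfl fun _ _ => Finset.sum_comm
    _ = ∑ k, ∑ l, ∑ m, ∑ j, F k m j l :=
        Finset.sum_congr rfl fun _ _ => Finset.sum_comm
    _ = ∑ l, ∑ k, ∑ m, ∑ j, F k m j l := Finset.sum_comm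
    _ = ∑ l, ∑ m, ∑ k, ∑ j, F k m j l :=
        Finset.sum_congr rfl fun _ _ => Finset.sum_comm
    _ = ∑ l, ∑ m, ∑ j, ∑ k, F k m j l :=
        Finset.sum_congr rfl fun _ _ => Finset.sum_congr rfl fun _ _ => Finset.sum_comm

/-- The purely algebraic rearrangement of finite sums behind the generator identity. -/
lemma generator_sum_rearrange {d d₁ : ℕ} (h U Da : Fin d₁ → ℝ)
    (A : Matrix (Fin d) (Fin d) ℝ)
    (c : Matrix (Fin d₁) (Fin d₁) ℝ) (C : Fin d₁ → Fin d₁ → Fin d → ℝ)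
    (Dj : Fin d₁ → Fin d → ℝ) (G : Fin d₁ → Fin d → ℝ) :
    1 / 2 * (∑ k : Fin d, ∑ m : Fin d₁,
        (2 * ((∑ l, C m l k * h l) * ∑ j, A j k * Dj m j) + h m * G m k))
      + ∑ m, ((∑ l, c m l * h l) * U m + h m * Da m)
    = ∑ l, h l * (1 / 2 * (∑ k, G l k) + Da l
        + (∑ m, ∑ j, (∑ k, C m l k * A j k) * Dj m j) + ∑ m, c m l * U m) := by
  simp only [mul_add, Finset.sum_add_distrib, Finset.mul_sum, Finset.sum_mul]
  have e1 : (∑ k : Fin d, ∑ m : Fin d₁, ∑ j : Fin d, ∑ l : Fin d₁,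
        1 / 2 * (2 * (C m l k * h l * (A j k * Dj m j))))
      = ∑ l : Fin d₁, ∑ m : Fin d₁, ∑ j : Fin d, ∑ k : Fin d,
        h l * (C m l k * A j k * Dj m j) := by
    rw [sum4_swap fun k m j l => 1 / 2 * (2 * (C m l k * h l * (A j k * Dj m j)))]
    exact Finset.sum_congr rfl fun l _ => Finset.sum_congr rfl fun m _ =>
      Finset.sum_congr rfl fun j _ => Finset.sum_congr rfl fun k _ => by ring
  have e2 : (∑ k : Fin d, ∑ m : Fin d₁, 1 / 2 * (h m * G m k))
      = ∑ m : Fin d₁, ∑ k : Fin d, h m * (1 / 2 * G m k) := by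
    rw [Finset.sum_comm]
    exact Finset.sum_congr rfl fun m _ => Finset.sum_congr rfl fun k _ => by ring
  have e4 : (∑ m : Fin d₁, ∑ l : Fin d₁, c m l * h l * U m)
      = ∑ l : Fin d₁, ∑ m : Fin d₁, h l * (c m l * U m) := by
    rw [Finset.sum_comm]
    exact Finset.sum_congr rfl fun l _ => Finset.sum_congr rfl fun m _ => by ring
  linarith [e1, e2, e4]

/-- The key computation matching the generator of the system (1.1), including the
nondiagonal first-order terms `B^j_{lm} ∂_j u_m` with `B^j_{lm} = Σ_k C_{mlk} A_{jk}`
and the zero-order coupling `c u`, with the scalar second-order operator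
`½ Tr(Qᵀ D²Φ Q) + ⟨q, ∇Φ⟩` in the enlarged phase space, where the `k`-th column of
`Q(x,h)` is `(A·e_k, C(h, e_k))` and `q(x,h) = (a, ch)`. -/
theorem enlarged_generator_identity
    (d d₁ : ℕ) (hd : 1 ≤ d) (hd₁ : 1 ≤ d₁)
    (u : (Fin d → ℝ) → (Fin d₁ → ℝ)) (hu : ContDiff ℝ 2 u)
    (x : Fin d → ℝ) (h : Fin d₁ → ℝ)
    (a : Fin d → ℝ) (A : Matrix (Fin d) (Fin d) ℝ)
    (c : Matrix (Fin d₁) (Fin d₁) ℝ) (C : Fin d₁ → Fin d₁ → Fin d → ℝ) :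
    (1 / 2) * (∑ k : Fin d,
        fderiv ℝ (fun p => fderiv ℝ (enlargedPairing u) p
            ((fun j => A j k), (fun m => ∑ l, C m l k * h l))) (x, h)
          ((fun j => A j k), (fun m => ∑ l, C m l k * h l)))
      + fderiv ℝ (enlargedPairing u) (x, h) (a, fun m => ∑ l, c m l * h l)
    = ∑ l, h l *
        ((1 / 2) * (∑ k : Fin d,
            fderiv ℝ (fun y => fderiv ℝ (fun y' => u y' l) y (fun j => A j k)) x
              (fun j => A j k))
          + fderiv ℝ (fun y => u y l) x a
          + (∑ m, ∑ j, (∑ k, C m l k * A j k) *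
              fderiv ℝ (fun y => u y m) x (Pi.single j 1))
          + ∑ m, c m l * u x m) := by
  have hB := fun k : Fin d =>
    enlargedPairing_fderiv2_apply u hu x h (fun j => A j k) (fun m => ∑ l, C m l k * h l)
  have hA := enlargedPairing_fderiv_apply u hu (x, h) a (fun m => ∑ l, c m l * h l)
  have hcol : ∀ (m : Fin d₁) (k : Fin d),
      fderiv ℝ (fun y => u y m) x (fun j => A j k)
        = ∑ j, A j k * fderiv ℝ (fun y => u y m) x (Pi.single j 1) :=
    fun m k => clm_eq_sum_single _ _
  simp only [hB, hA, hcol]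
  exact generator_sum_rearrange h (fun m => u x m)
    (fun m => fderiv ℝ (fun y => u y m) x a) A c C
    (fun m j => fderiv ℝ (fun y => u y m) x (Pi.single j 1))
    (fun m k => fderiv ℝ
      (fun y => fderiv ℝ (fun y' => u y' m) y (fun j => A j k)) x (fun j => A j k))
end

section
/- Let d, d₁ ≥ 1, T > 0, let u : [0,T] × ℝ^d → ℝ^{d₁} be continuously differentiable in time and twice continuously differentiable in space, and let u₀ : ℝ^d → ℝ^{d₁}. Let a(x) ∈ ℝ^d, A(x) ∈ ℝ^{d×d}, c(x) ∈ ℝ^{d₁×d₁}, C(x) = (C_{mlk}(x)) ∈ ℝ^{d₁×d₁×d} and g : [0,T] × ℝ^d × ℝ^{d₁} × ℝ^{d×d₁} → ℝ^{d₁} be given. Define Φ(s,x,h) = ⟨h, u(s,x)⟩, the enlarged drift q(x,h) = (a(x), c(x)h) ∈ ℝ^{d+d₁}, the enlarged diffusion Q(x,h) : ℝ^d → ℝ^{d+d₁} by Q(x,h)w = (A(x)w, C(x)(h,w)) with C(x)(h,w)_m = Σ_{l,k} C_{mlk}(x) h_l w_k, the matrix K(s,x) ∈ ℝ^{d×d₁}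 by K_{kl}(s,x) = Σ_m C_{mlk}(x) u_m(s,x) + Σ_j A_{jk}(x) ∂_j u_l(s,x), and G(s,x,h) = ⟨h, g(s,x, u(s,x), K(s,x))⟩. Then the following are equivalent: (i) for every l ∈ {1,…,d₁} and every (s,x) ∈ [0,T] × ℝ^d, ∂_s u_l + ½ Tr(Aᵀ∇²u_l A) + ⟨a, ∇u_l⟩ + Σ_{m,j,k} C_{mlk} A_{jk} ∂_j u_m + Σ_m c_{ml} u_m + g_l(s,x,u(s,x),K(s,x)) = 0 and u(T,x) = u₀(x); (ii) for every h ∈ ℝ^{d₁} and every (s,x) ∈ [0,T] × ℝ^d, ∂_s Φ(s,x,h) + ½ Tr(Q(x,h)ᵀ D²Φ(s,x,h) Q(x,h)) + ⟨q(x,h), ∇Φ(s,x,h)⟩ + G(s,x,h) = 0 and Φ(T,x,h) = ⟨h, u₀(x)⟩, where ∇Φ and D²Φ are taken in the variables (x,h). -/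
open ContinuousLinearMap Finset

private lemma clm_basis' {d : ℕ} (φ : (Fin d → ℝ) →L[ℝ] ℝ) (v : Fin d → ℝ) :
    φ v = ∑ j, v j * φ (Pi.single j 1) := by
  conv_lhs => rw [← Finset.univ_sum_single v]
  rw [map_sum]
  refine Finset.sum_congr rfl fun j _ => ?_
  have : Pi.single j (v j) = v j • (Pi.single j 1 : Fin d → ℝ) := by
    rw [← Pi.single_smul, smul_eq_mul, mul_one]
  rw [this, map_smul, smul_eq_mul]

private lemma sum4_perm' {α β γ δ : Type*} [Fintype α] [Fintype β] [Fintype γ] [Fintype δ]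
    (F : α → β → γ → δ → ℝ) :
    ∑ k, ∑ m, ∑ j, ∑ l, F k m j l = ∑ l, ∑ m, ∑ j, ∑ k, F k m j l := by
  rw [show ∑ k, ∑ m, ∑ j, ∑ l, F k m j l = ∑ k, ∑ m, ∑ l, ∑ j, F k m j l from
    Finset.sum_congr rfl fun k _ => Finset.sum_congr rfl fun m _ => Finset.sum_comm]
  rw [show ∑ k, ∑ m, ∑ l, ∑ j, F k m j l = ∑ k, ∑ l, ∑ m, ∑ j, F k m j l from
    Finset.sum_congr rfl fun k _ => Finset.sum_comm]
  rw [show ∑ k, ∑ l, ∑ m, ∑ j, F k m j l = ∑ l, ∑ k, ∑ m, ∑ j, F k m j l from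
    Finset.sum_comm]
  refine Finset.sum_congr rfl fun l _ => ?_
  rw [show ∑ k, ∑ m, ∑ j, F k m j l = ∑ m, ∑ k, ∑ j, F k m j l from Finset.sum_comm]
  exact Finset.sum_congr rfl fun m _ => Finset.sum_comm

private lemma fderiv_pair_apply' {d d₁ : ℕ} (f : (Fin d → ℝ) → Fin d₁ → ℝ)
    (hf : Differentiable ℝ f) (x v : Fin d → ℝ) (h w : Fin d₁ → ℝ) :
    fderiv ℝ (fun p : (Fin d → ℝ) × (Fin d₁ → ℝ) => ∑ m, p.2 m * f p.1 m) (x, h) (v, w)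
      = ∑ m, (h m * fderiv ℝ (fun y => f y m) x v + f x m * w m) := by
  have hfm : ∀ m, DifferentiableAt ℝ (fun y => f y m) x :=
    fun m => (differentiable_pi.mp hf m) x
  have H : HasFDerivAt (fun p : (Fin d → ℝ) × (Fin d₁ → ℝ) => ∑ m, p.2 m * f p.1 m)
      (∑ m, (h m • ((fderiv ℝ (fun y => f y m) x).comp (fst ℝ (Fin d → ℝ) (Fin d₁ → ℝ)))
        + f x m • ((proj m).comp (snd ℝ (Fin d → ℝ) (Fin d₁ → ℝ))))) (x, h) := by
    apply HasFDerivAt.fun_sum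
    intro m _
    exact (((proj m).comp (snd ℝ (Fin d → ℝ) (Fin d₁ → ℝ))).hasFDerivAt).mul
      (((hfm m).hasFDerivAt).comp (x, h) hasFDerivAt_fst)
  rw [H.fderiv]
  simp

private lemma fderiv2_pair_apply' {d d₁ : ℕ} (f : (Fin d → ℝ) → Fin d₁ → ℝ)
    (hf : ContDiff ℝ 2 f) (x v : Fin d → ℝ) (h w : Fin d₁ → ℝ) :
    fderiv ℝ (fun p : (Fin d → ℝ) × (Fin d₁ → ℝ) =>
        fderiv ℝ (fun q : (Fin d → ℝ) × (Fin d₁ → ℝ) => ∑ m, q.2 m * f q.1 m) p (v, w))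
        (x, h) (v, w)
      = ∑ m, (h m * fderiv ℝ (fun y => fderiv ℝ (fun y' => f y' m) y v) x v
          + 2 * (fderiv ℝ (fun y => f y m) x v * w m)) := by
  have hfm : ∀ m, ContDiff ℝ 2 (fun y => f y m) := contDiff_pi.mp hf
  have hGm : ∀ m, ContDiff ℝ 1 (fun y => fderiv ℝ (fun y' => f y' m) y v) := fun m =>
    (((hfm m).fderiv_right (by norm_num)).clm_apply contDiff_const)
  have hdiff : Differentiable ℝ f := hf.differentiable (by norm_num)
  have heq : (fun p : (Fin d → ℝ) × (Fin d₁ → ℝ) =>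
      fderiv ℝ (fun q : (Fin d → ℝ) × (Fin d₁ → ℝ) => ∑ m, q.2 m * f q.1 m) p (v, w))
      = fun p => ∑ m, (p.2 m * fderiv ℝ (fun y => f y m) p.1 v + f p.1 m * w m) := by
    funext p
    obtain ⟨y, k⟩ := p
    exact fderiv_pair_apply' f hdiff y v k w
  rw [heq]
  have H : HasFDerivAt
      (fun p : (Fin d → ℝ) × (Fin d₁ → ℝ) =>
        ∑ m, (p.2 m * fderiv ℝ (fun y => f y m) p.1 v + f p.1 m * w m))
      (∑ m, ((h m • ((fderiv ℝ (fun y => fderiv ℝ (fun y' => f y' m) y v) x).comp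
            (fst ℝ (Fin d → ℝ) (Fin d₁ → ℝ)))
          + (fderiv ℝ (fun y => f y m) x v) • ((proj m).comp (snd ℝ (Fin d → ℝ) (Fin d₁ → ℝ))))
          + (w m) • ((fderiv ℝ (fun y => f y m) x).comp (fst ℝ (Fin d → ℝ) (Fin d₁ → ℝ))))) (x, h) := by
    apply HasFDerivAt.fun_sum
    intro m _
    refine HasFDerivAt.add ?_ ?_
    · exact (((proj m).comp (snd ℝ (Fin d → ℝ) (Fin d₁ → ℝ))).hasFDerivAt).mul
        ((((hGm m).differentiable (by norm_num) x).hasFDerivAt).comp (x, h) hasFDerivAt_fst)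
    · have h1 : HasFDerivAt (fun y => f y m) (fderiv ℝ (fun y => f y m) x) x :=
        (((contDiff_pi.mp hf m).differentiable (by norm_num)) x).hasFDerivAt
      have h2 : HasFDerivAt (fun p : (Fin d → ℝ) × (Fin d₁ → ℝ) => f p.1 m)
          ((fderiv ℝ (fun y => f y m) x).comp (fst ℝ (Fin d → ℝ) (Fin d₁ → ℝ))) (x, h) :=
        HasFDerivAt.comp (g := fun y => f y m) (f := Prod.fst) (x, h) h1 hasFDerivAt_fst
      exact h2.mul_const (w m)
  rw [H.fderiv]
  simp
  exact Finset.sum_congr rfl fun m _ => by ring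

private lemma deriv_pair_time' {d₁ : ℕ} (φ : ℝ → Fin d₁ → ℝ) (hφ : Differentiable ℝ φ)
    (h : Fin d₁ → ℝ) (s : ℝ) :
    deriv (fun t => ∑ m, h m * φ t m) s = ∑ m, h m * deriv (fun t => φ t m) s := by
  have hm : ∀ m, DifferentiableAt ℝ (fun t => φ t m) s := fun m => (differentiable_pi.mp hφ m) s
  rw [deriv_fun_sum (fun m _ => ((hm m).const_mul (h m)))]
  exact Finset.sum_congr rfl fun m _ => deriv_const_mul (h m) (hm m)

private lemma key_algebra' {d d₁ : ℕ} (h : Fin d₁ → ℝ)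
    (D1 Da Gv uv : Fin d₁ → ℝ) (D2 DA Dj : Fin d₁ → Fin d → ℝ)
    (Cc : Fin d₁ → Fin d₁ → Fin d → ℝ) (Am : Fin d → Fin d → ℝ)
    (cc : Fin d₁ → Fin d₁ → ℝ)
    (hDA : ∀ m k, DA m k = ∑ j, Am j k * Dj m j) :
    (∑ m, h m * D1 m)
      + 1 / 2 * (∑ k, ∑ m, (h m * D2 m k + 2 * (DA m k * (∑ l, Cc m l k * h l))))
      + (∑ m, (h m * Da m + uv m * (∑ l, cc m l * h l)))
      + (∑ m, h m * Gv m)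
    = ∑ l, h l * (D1 l + 1 / 2 * (∑ k, D2 l k) + Da l
        + (∑ m, ∑ j, ∑ k, Cc m l k * Am j k * Dj m j)
        + (∑ m, cc m l * uv m) + Gv l) := by
  have expand : ∑ l, h l * (D1 l + 1 / 2 * (∑ k, D2 l k) + Da l
        + (∑ m, ∑ j, ∑ k, Cc m l k * Am j k * Dj m j)
        + (∑ m, cc m l * uv m) + Gv l)
      = (∑ l, h l * D1 l) + (∑ l, h l * (1 / 2 * ∑ k, D2 l k))
        + (∑ l, h l * Da l)
        + (∑ l, h l * (∑ m, ∑ j, ∑ k, Cc m l k * Am j k * Dj m j))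
        + (∑ l, h l * (∑ m, cc m l * uv m)) + (∑ l, h l * Gv l) := by
    simp only [mul_add, Finset.sum_add_distrib]
  rw [expand]
  have e2 : 1 / 2 * (∑ k, ∑ m, (h m * D2 m k + 2 * (DA m k * (∑ l, Cc m l k * h l))))
      = (∑ l, h l * (1 / 2 * ∑ k, D2 l k))
        + (∑ l, h l * (∑ m, ∑ j, ∑ k, Cc m l k * Am j k * Dj m j)) := by
    have p1 : 1 / 2 * (∑ k, ∑ m, h m * D2 m k) = ∑ l, h l * (1 / 2 * ∑ k, D2 l k) := by
      rw [Finset.sum_comm]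
      simp only [Finset.mul_sum]
      exact Finset.sum_congr rfl fun m _ => Finset.sum_congr rfl fun k _ => by ring
    have p2 : ∑ k, ∑ m, (DA m k * (∑ l, Cc m l k * h l))
        = ∑ l, h l * (∑ m, ∑ j, ∑ k, Cc m l k * Am j k * Dj m j) := by
      have lhs_eq : ∑ k, ∑ m, (DA m k * (∑ l, Cc m l k * h l))
          = ∑ k, ∑ m, ∑ j, ∑ l, (Am j k * Dj m j) * (Cc m l k * h l) := by
        refine Finset.sum_congr rfl fun k _ => Finset.sum_congr rfl fun m _ => ?_
        rw [hDA, Finset.sum_mul]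
        exact Finset.sum_congr rfl fun j _ => by rw [Finset.mul_sum]
      rw [lhs_eq, sum4_perm']
      simp only [Finset.mul_sum]
      refine Finset.sum_congr rfl fun l _ => Finset.sum_congr rfl fun m _ =>
        Finset.sum_congr rfl fun j _ => Finset.sum_congr rfl fun k _ => by ring
    calc 1 / 2 * (∑ k, ∑ m, (h m * D2 m k + 2 * (DA m k * (∑ l, Cc m l k * h l))))
        = 1 / 2 * ((∑ k, ∑ m, h m * D2 m k)
            + 2 * ∑ k, ∑ m, (DA m k * (∑ l, Cc m l k * h l))) := by
          simp only [Finset.sum_add_distrib, Finset.mul_sum]; try ring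
      _ = 1 / 2 * (∑ k, ∑ m, h m * D2 m k)
            + ∑ k, ∑ m, (DA m k * (∑ l, Cc m l k * h l)) := by ring
      _ = _ := by rw [p1, p2]
  have e3 : (∑ m, (h m * Da m + uv m * (∑ l, cc m l * h l)))
      = (∑ l, h l * Da l) + (∑ l, h l * (∑ m, cc m l * uv m)) := by
    rw [Finset.sum_add_distrib]
    congr 1
    have : ∑ m, uv m * (∑ l, cc m l * h l) = ∑ m, ∑ l, uv m * (cc m l * h l) :=
      Finset.sum_congr rfl fun m _ => Finset.mul_sum _ _ _
    rw [this, Finset.sum_comm]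
    simp only [Finset.mul_sum]
    exact Finset.sum_congr rfl fun l _ => Finset.sum_congr rfl fun m _ => by ring
  rw [e2, e3]
  ring

private lemma single_mul_sum' {n : ℕ} (l : Fin n) (E : Fin n → ℝ) :
    ∑ l', (Pi.single l 1 : Fin n → ℝ) l' * E l' = E l := by
  rw [Finset.sum_eq_single l]
  · simp
  · intro b _ hb
    simp [Pi.single_eq_of_ne hb]
  · simp

private theorem main_aux (d d₁ : ℕ) (T : ℝ)
    (u : ℝ → (Fin d → ℝ) → Fin d₁ → ℝ)
    (hu_time : ∀ x, ContDiff ℝ 1 fun s => u s x)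
    (hu_space : ∀ s, ContDiff ℝ 2 fun x => u s x)
    (u₀ : (Fin d → ℝ) → Fin d₁ → ℝ)
    (a : (Fin d → ℝ) → Fin d → ℝ)
    (A : (Fin d → ℝ) → Matrix (Fin d) (Fin d) ℝ)
    (c : (Fin d → ℝ) → Matrix (Fin d₁) (Fin d₁) ℝ)
    (C : (Fin d → ℝ) → Fin d₁ → Fin d₁ → Fin d → ℝ)
    (G : ℝ → (Fin d → ℝ) → Fin d₁ → ℝ) :
    ((∀ l : Fin d₁, ∀ s ∈ Set.Icc 0 T, ∀ x : Fin d → ℝ,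
        deriv (fun t => u t x l) s
          + (1 / 2) * (∑ k, fderiv ℝ
              (fun y => fderiv ℝ (fun y' => u s y' l) y (fun j => A x j k)) x
              (fun j => A x j k))
          + fderiv ℝ (fun y => u s y l) x (a x)
          + (∑ m, ∑ j, ∑ k, C x m l k * A x j k *
              fderiv ℝ (fun y => u s y m) x (Pi.single j 1))
          + (∑ m, c x m l * u s x m)
          + G s x l = 0)
      ∧ (∀ x, u T x = u₀ x))
    ↔
    ((∀ h : Fin d₁ → ℝ, ∀ s ∈ Set.Icc 0 T, ∀ x : Fin d → ℝ,
        deriv (fun t => ∑ m, h m * u t x m) s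
          + (1 / 2) * (∑ k, fderiv ℝ
              (fun p => fderiv ℝ
                  (fun q : (Fin d → ℝ) × (Fin d₁ → ℝ) => ∑ m, q.2 m * u s q.1 m) p
                  ((fun j => A x j k), (fun m => ∑ l, C x m l k * h l))) (x, h)
              ((fun j => A x j k), (fun m => ∑ l, C x m l k * h l)))
          + fderiv ℝ (fun q : (Fin d → ℝ) × (Fin d₁ → ℝ) => ∑ m, q.2 m * u s q.1 m) (x, h)
              (a x, fun m => ∑ l, c x m l * h l)
          + (∑ m, h m * G s x m) = 0)
      ∧ (∀ (x : Fin d → ℝ) (h : Fin d₁ → ℝ),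
          ∑ m, h m * u T x m = ∑ m, h m * u₀ x m)) := by
  have key : ∀ (s : ℝ) (x : Fin d → ℝ) (h : Fin d₁ → ℝ),
      deriv (fun t => ∑ m, h m * u t x m) s
        + (1 / 2) * (∑ k, fderiv ℝ
            (fun p => fderiv ℝ
                (fun q : (Fin d → ℝ) × (Fin d₁ → ℝ) => ∑ m, q.2 m * u s q.1 m) p
                ((fun j => A x j k), (fun m => ∑ l, C x m l k * h l))) (x, h)
            ((fun j => A x j k), (fun m => ∑ l, C x m l k * h l)))
        + fderiv ℝ (fun q : (Fin d → ℝ) × (Fin d₁ → ℝ) => ∑ m, q.2 m * u s q.1 m) (x, h)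
            (a x, fun m => ∑ l, c x m l * h l)
        + (∑ m, h m * G s x m)
      = ∑ l, h l * (deriv (fun t => u t x l) s
          + (1 / 2) * (∑ k, fderiv ℝ
              (fun y => fderiv ℝ (fun y' => u s y' l) y (fun j => A x j k)) x
              (fun j => A x j k))
          + fderiv ℝ (fun y => u s y l) x (a x)
          + (∑ m, ∑ j, ∑ k, C x m l k * A x j k *
              fderiv ℝ (fun y => u s y m) x (Pi.single j 1))
          + (∑ m, c x m l * u s x m)
          + G s x l) := by
    intro s x h
    have hus : Differentiable ℝ (fun y => u s y) := (hu_space s).differentiable (by norm_num)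
    rw [deriv_pair_time' (fun t => u t x) ((hu_time x).differentiable (by norm_num)) h s]
    rw [fderiv_pair_apply' (fun y => u s y) hus x (a x) h (fun m => ∑ l, c x m l * h l)]
    rw [show (∑ k, fderiv ℝ
            (fun p => fderiv ℝ
                (fun q : (Fin d → ℝ) × (Fin d₁ → ℝ) => ∑ m, q.2 m * u s q.1 m) p
                ((fun j => A x j k), (fun m => ∑ l, C x m l k * h l))) (x, h)
            ((fun j => A x j k), (fun m => ∑ l, C x m l k * h l)))
        = ∑ k, ∑ m, (h m * fderiv ℝ
              (fun y => fderiv ℝ (fun y' => u s y' m) y (fun j => A x j k)) x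
              (fun j => A x j k)
            + 2 * (fderiv ℝ (fun y => u s y m) x (fun j => A x j k)
                * (∑ l, C x m l k * h l))) from
      Finset.sum_congr rfl fun k _ =>
        fderiv2_pair_apply' (fun y => u s y) (hu_space s) x (fun j => A x j k) h
          (fun m => ∑ l, C x m l k * h l)]
    exact key_algebra' h
      (fun m => deriv (fun t => u t x m) s)
      (fun m => fderiv ℝ (fun y => u s y m) x (a x))
      (fun m => G s x m)
      (fun m => u s x m)
      (fun m k => fderiv ℝ
        (fun y => fderiv ℝ (fun y' => u s y' m) y (fun j => A x j k)) x (fun j => A x j k))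
      (fun m k => fderiv ℝ (fun y => u s y m) x (fun j => A x j k))
      (fun m j => fderiv ℝ (fun y => u s y m) x (Pi.single j 1))
      (fun m l k => C x m l k)
      (fun j k => A x j k)
      (fun m l => c x m l)
      (fun m k => clm_basis' (fderiv ℝ (fun y => u s y m) x) (fun j => A x j k))
  constructor
  · rintro ⟨h1, h2⟩
    refine ⟨fun h s hs x => ?_, fun x h => Finset.sum_congr rfl fun m _ => by rw [h2]⟩
    rw [key s x h]
    exact Finset.sum_eq_zero fun l _ => by rw [h1 l s hs x, mul_zero]
  · rintro ⟨h1, h2⟩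
    constructor
    · intro l s hs x
      have hh := h1 (Pi.single l 1) s hs x
      rw [key s x (Pi.single l 1), single_mul_sum' l] at hh
      exact hh
    · intro x
      funext m
      have hh := h2 x (Pi.single m 1)
      rw [single_mul_sum' m, single_mul_sum' m] at hh
      exact hh

/-- Reduction of the Cauchy problem for the system of quasilinear parabolic
equations (1.1)/(4.5), with nondiagonal first-order coefficients
`B^j_{lm} = Σ_k C_{mlk} A_{jk}` and gradient coupling `K = Cᵀu + Aᵀ∇u`, to the
Cauchy problem for a single scalar quasilinear parabolic equation (1.8)/(4.6)
in the enlarged phase space `ℝ^d × ℝ^{d₁}`, via `Φ(s,x,h) = ⟨h, u(s,x)⟩`. -/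
theorem system_scalar_cauchy_equivalence
    (d d₁ : ℕ) (hd : 1 ≤ d) (hd₁ : 1 ≤ d₁) (T : ℝ) (hT : 0 < T)
    (u : ℝ → (Fin d → ℝ) → (Fin d₁ → ℝ))
    (hu_time : ∀ x, ContDiff ℝ 1 (fun s => u s x))
    (hu_space : ∀ s, ContDiff ℝ 2 (fun x => u s x))
    (u₀ : (Fin d → ℝ) → (Fin d₁ → ℝ))
    (a : (Fin d → ℝ) → (Fin d → ℝ))
    (A : (Fin d → ℝ) → Matrix (Fin d) (Fin d) ℝ)
    (c : (Fin d → ℝ) → Matrix (Fin d₁) (Fin d₁) ℝ)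
    (C : (Fin d → ℝ) → Fin d₁ → Fin d₁ → Fin d → ℝ)
    (g : ℝ → (Fin d → ℝ) → (Fin d₁ → ℝ) → (Fin d → Fin d₁ → ℝ) → (Fin d₁ → ℝ)) :
    -- the gradient coupling `K(s,x)_{kl} = Σ_m C_{mlk} u_m + Σ_j A_{jk} ∂_j u_l`
    let K : ℝ → (Fin d → ℝ) → Fin d → Fin d₁ → ℝ := fun s x k l =>
      (∑ m, C x m l k * u s x m) +
        ∑ j, A x j k * fderiv ℝ (fun y => u s y l) x (Pi.single j 1)
    -- `Φ(s,x,h) = ⟨h, u(s,x)⟩`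
    let Φ : ℝ → (Fin d → ℝ) × (Fin d₁ → ℝ) → ℝ := fun s p => ∑ m, p.2 m * u s p.1 m
    -- the `k`-th column `(A e_k, C(h, e_k))` of the enlarged diffusion `Q(x,h)`
    let Qcol : (Fin d → ℝ) → (Fin d₁ → ℝ) → Fin d → (Fin d → ℝ) × (Fin d₁ → ℝ) :=
      fun x h k => ((fun j => A x j k), (fun m => ∑ l, C x m l k * h l))
    -- (i) the system of quasilinear parabolic equations with terminal data `u₀`
    ((∀ l : Fin d₁, ∀ s ∈ Set.Icc 0 T, ∀ x : Fin d → ℝ,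
        deriv (fun t => u t x l) s
          + (1 / 2) * (∑ k, fderiv ℝ
              (fun y => fderiv ℝ (fun y' => u s y' l) y (fun j => A x j k)) x
              (fun j => A x j k))
          + fderiv ℝ (fun y => u s y l) x (a x)
          + (∑ m, ∑ j, ∑ k, C x m l k * A x j k *
              fderiv ℝ (fun y => u s y m) x (Pi.single j 1))
          + (∑ m, c x m l * u s x m)
          + g s x (u s x) (K s x) l = 0)
      ∧ (∀ x, u T x = u₀ x))
    ↔
    -- (ii) the scalar parabolic equation in the enlarged phase space
    ((∀ h : Fin d₁ → ℝ, ∀ s ∈ Set.Icc 0 T, ∀ x : Fin d → ℝ,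
        deriv (fun t => Φ t (x, h)) s
          + (1 / 2) * (∑ k, fderiv ℝ
              (fun p => fderiv ℝ (Φ s) p (Qcol x h k)) (x, h) (Qcol x h k))
          + fderiv ℝ (Φ s) (x, h) (a x, fun m => ∑ l, c x m l * h l)
          + (∑ m, h m * g s x (u s x) (K s x) m) = 0)
      ∧ (∀ (x : Fin d → ℝ) (h : Fin d₁ → ℝ), Φ T (x, h) = ∑ m, h m * u₀ x m)) := by
  
  intro K Φ Qcol
  exact main_aux d d₁ T u hu_time hu_space u₀ a A c C (fun s x => g s x (u s x) (K s x))
end
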